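/- arXiv:1903.09945 — 2 statements merged into one kernel-verified Lean document; each statement's English description precedes it below -/
import Mathlib

section
/- Let f > 0 and u² + v² < f, and suppose additionally u² + v² < 1 and f − u² − v² < 1 and f − 2u√(f−u²−v²) > 0. With the substitution x₁ = u cos α − v sin α, y₁ = u sin α + v cos α, x₂ = √(f−u²−v²) cos α, y₂ = √(f−u²−v²) sin α, the Hamiltonian H (with Γ₁=Γ₂=1) satisfies H = H₁(u,v), where H₁(u,v) = ½{ln[(1−u²−v²)(1−f+u²+v²)] − (c+ε)ln(f − 2u√(f−u²−v²)) + ε ln[(1 − u√(f−u²−v²))² + v²(f−u²−v²)]}. -/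
noncomputable def Hcart (c ε x₁ y₁ x₂ y₂ : ℝ) : ℝ :=
  (1/2) * (Real.log (1 - x₁^2 - y₁^2) + Real.log (1 - x₂^2 - y₂^2)
    + ε * Real.log ((x₁ - x₂)^2 + (y₁ - y₂)^2 + (1 - x₁^2 - y₁^2) * (1 - x₂^2 - y₂^2))
    - (c + ε) * Real.log ((x₁ - x₂)^2 + (y₁ - y₂)^2))

noncomputable def H₁ (c ε f u v : ℝ) : ℝ :=
  (1/2) * (Real.log ((1 - u^2 - v^2) * (1 - f + u^2 + v^2))
    - (c + ε) * Real.log (f - 2*u*Real.sqrt (f - u^2 - v^2))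
    + ε * Real.log ((1 - u*Real.sqrt (f - u^2 - v^2))^2 + v^2 * (f - u^2 - v^2)))

theorem reduced_hamiltonian (c ε f u v α : ℝ) (hf : 0 < f) (h : u^2 + v^2 < f)
    (h1 : u^2 + v^2 < 1) (h2 : f - u^2 - v^2 < 1)
    (h3 : 0 < f - 2*u*Real.sqrt (f - u^2 - v^2)) :
    Hcart c ε (u * Real.cos α - v * Real.sin α) (u * Real.sin α + v * Real.cos α)
      (Real.sqrt (f - u^2 - v^2) * Real.cos α) (Real.sqrt (f - u^2 - v^2) * Real.sin α)
      = H₁ c ε f u v := by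
  set s := Real.sqrt (f - u^2 - v^2) with hs
  have hs2 : s^2 = f - u^2 - v^2 := Real.sq_sqrt (by linarith)
  have hc : Real.cos α ^ 2 + Real.sin α ^ 2 = 1 := by
    rw [add_comm]; exact Real.sin_sq_add_cos_sq α
  have e1 : 1 - (u * Real.cos α - v * Real.sin α)^2 - (u * Real.sin α + v * Real.cos α)^2
      = 1 - u^2 - v^2 := by linear_combination (-(u^2) - v^2) * hc
  have e2 : 1 - (s * Real.cos α)^2 - (s * Real.sin α)^2 = 1 - f + u^2 + v^2 := by
    linear_combination (-(s^2)) * hc - hs2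
  have e3 : (u * Real.cos α - v * Real.sin α - s * Real.cos α)^2
      + (u * Real.sin α + v * Real.cos α - s * Real.sin α)^2
      = f - 2*u*s := by
    linear_combination (u^2 + v^2 + s^2 - 2*u*s) * hc + hs2
  have e4 : f - 2*u*s + (1 - u^2 - v^2) * (1 - f + u^2 + v^2)
      = (1 - u*s)^2 + v^2 * (f - u^2 - v^2) := by
    linear_combination (-(u^2)) * hs2
  have hA : (0:ℝ) < 1 - u^2 - v^2 := by linarith
  have hB : (0:ℝ) < 1 - f + u^2 + v^2 := by linarith
  unfold Hcart H₁
  rw [e1, e2, e3, ← hs, e4, Real.log_mul (ne_of_gt hA) (ne_of_gt hB)]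
  ring
end

section
/- Define the Poisson bracket {A,B} = Σ_{k=1,2} (1/Γ_k)(∂A/∂x_k · ∂B/∂y_k − ∂A/∂y_k · ∂B/∂x_k) for smooth functions A, B of (x₁,y₁,x₂,y₂), with Γ₁=Γ₂=1. Then for U = (x₁x₂+y₁y₂)/√(x₂²+y₂²) and V = (y₁x₂−x₁y₂)/√(x₂²+y₂²), one has {U,V} = 1 at every point with x₂²+y₂² > 0. -/
noncomputable def U (x₁ y₁ x₂ y₂ : ℝ) : ℝ := (x₁*x₂ + y₁*y₂) / Real.sqrt (x₂^2 + y₂^2)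
noncomputable def V (x₁ y₁ x₂ y₂ : ℝ) : ℝ := (y₁*x₂ - x₁*y₂) / Real.sqrt (x₂^2 + y₂^2)

/-- Poisson bracket with Γ₁ = Γ₂ = 1, written via partial derivatives as
derivatives of one-variable slices. -/
noncomputable def bracket (A B : ℝ → ℝ → ℝ → ℝ → ℝ) (x₁ y₁ x₂ y₂ : ℝ) : ℝ :=
  (deriv (fun t => A t y₁ x₂ y₂) x₁) * (deriv (fun t => B x₁ t x₂ y₂) y₁)
  - (deriv (fun t => A x₁ t x₂ y₂) y₁) * (deriv (fun t => B t y₁ x₂ y₂) x₁)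
  + (deriv (fun t => A x₁ y₁ t y₂) x₂) * (deriv (fun t => B x₁ y₁ x₂ t) y₂)
  - (deriv (fun t => A x₁ y₁ x₂ t) y₂) * (deriv (fun t => B x₁ y₁ t y₂) x₂)

theorem UV_canonical (x₁ y₁ x₂ y₂ : ℝ) (h : 0 < x₂^2 + y₂^2) :
    bracket U V x₁ y₁ x₂ y₂ = 1 := by
  have hr0 : 0 < Real.sqrt (x₂^2 + y₂^2) := Real.sqrt_pos.mpr h
  set r := Real.sqrt (x₂^2 + y₂^2) with hrdef
  have hrne : r ≠ 0 := hr0.ne'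
  have hr2 : r^2 = x₂^2 + y₂^2 := Real.sq_sqrt h.le
  have hsx : HasDerivAt (fun t : ℝ => Real.sqrt (t^2 + y₂^2)) (x₂ / r) x₂ := by
    have h1 : HasDerivAt (fun t : ℝ => t^2 + y₂^2) (2*x₂) x₂ := by
      simpa [mul_comm] using ((hasDerivAt_pow 2 x₂).add_const (y₂^2))
    have h2 := (Real.hasDerivAt_sqrt h.ne').comp x₂ h1
    refine h2.congr_deriv ?_
    rw [← hrdef]
    field_simp
  have hsy : HasDerivAt (fun t : ℝ => Real.sqrt (x₂^2 + t^2)) (y₂ / r) y₂ := by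
    have h1 : HasDerivAt (fun t : ℝ => x₂^2 + t^2) (2*y₂) y₂ := by
      simpa [mul_comm] using ((hasDerivAt_pow 2 y₂).const_add (x₂^2))
    have h2 := (Real.hasDerivAt_sqrt h.ne').comp y₂ h1
    refine h2.congr_deriv ?_
    rw [← hrdef]
    field_simp
  have d1 : deriv (fun t => U t y₁ x₂ y₂) x₁ = x₂ / r := by
    have : HasDerivAt (fun t => (t*x₂ + y₁*y₂)/r) (x₂/r) x₁ := by
      have := (((hasDerivAt_id x₁).mul_const x₂).add_const (y₁*y₂)).div_const r
      simpa using this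
    simpa [U, ← hrdef] using this.deriv
  have d2 : deriv (fun t => U x₁ t x₂ y₂) y₁ = y₂ / r := by
    have : HasDerivAt (fun t => (x₁*x₂ + t*y₂)/r) (y₂/r) y₁ := by
      have := (((hasDerivAt_id y₁).mul_const y₂).const_add (x₁*x₂)).div_const r
      simpa using this
    simpa [U, ← hrdef] using this.deriv
  have d3 : deriv (fun t => V t y₁ x₂ y₂) x₁ = -y₂ / r := by
    have : HasDerivAt (fun t => (y₁*x₂ - t*y₂)/r) (-y₂/r) x₁ := by
      have := (((hasDerivAt_id x₁).mul_const y₂).const_sub (y₁*x₂)).div_const r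
      simpa using this
    simpa [V, ← hrdef] using this.deriv
  have d4 : deriv (fun t => V x₁ t x₂ y₂) y₁ = x₂ / r := by
    have : HasDerivAt (fun t => (t*x₂ - x₁*y₂)/r) (x₂/r) y₁ := by
      have := (((hasDerivAt_id y₁).mul_const x₂).sub_const (x₁*y₂)).div_const r
      simpa using this
    simpa [V, ← hrdef] using this.deriv
  have d5 : deriv (fun t => U x₁ y₁ t y₂) x₂ =
      (x₁ * r - (x₁*x₂ + y₁*y₂) * (x₂/r)) / r^2 := by
    have hnum : HasDerivAt (fun t : ℝ => x₁*t + y₁*y₂) x₁ x₂ := by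
      simpa using ((hasDerivAt_id x₂).const_mul x₁).add_const (y₁*y₂)
    have := hnum.div hsx hrne
    simpa [U, ← hrdef, Pi.div_def] using this.deriv
  have d6 : deriv (fun t => U x₁ y₁ x₂ t) y₂ =
      (y₁ * r - (x₁*x₂ + y₁*y₂) * (y₂/r)) / r^2 := by
    have hnum : HasDerivAt (fun t : ℝ => x₁*x₂ + y₁*t) y₁ y₂ := by
      simpa using (((hasDerivAt_id y₂).const_mul y₁).const_add (x₁*x₂))
    have := hnum.div hsy hrne
    simpa [U, ← hrdef, Pi.div_def] using this.deriv
  have d7 : deriv (fun t => V x₁ y₁ t y₂) x₂ =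
      (y₁ * r - (y₁*x₂ - x₁*y₂) * (x₂/r)) / r^2 := by
    have hnum : HasDerivAt (fun t : ℝ => y₁*t - x₁*y₂) y₁ x₂ := by
      simpa using (((hasDerivAt_id x₂).const_mul y₁).sub_const (x₁*y₂))
    have := hnum.div hsx hrne
    simpa [V, ← hrdef, Pi.div_def] using this.deriv
  have d8 : deriv (fun t => V x₁ y₁ x₂ t) y₂ =
      (-x₁ * r - (y₁*x₂ - x₁*y₂) * (y₂/r)) / r^2 := by
    have hnum : HasDerivAt (fun t : ℝ => y₁*x₂ - x₁*t) (-x₁) y₂ := by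
      simpa using (((hasDerivAt_id y₂).const_mul x₁).const_sub (y₁*x₂))
    have := hnum.div hsy hrne
    simpa [V, ← hrdef, Pi.div_def] using this.deriv
  rw [bracket, d1, d2, d3, d4, d5, d6, d7, d8]
  have hS : x₂/r * (x₂/r) - y₂/r * (-y₂/r) = 1 := by
    field_simp
    linear_combination -hr2
  have hT : (x₁*r - (x₁*x₂ + y₁*y₂) * (x₂/r))/r^2 * ((-x₁*r - (y₁*x₂ - x₁*y₂) * (y₂/r))/r^2)
      - (y₁*r - (x₁*x₂ + y₁*y₂) * (y₂/r))/r^2 * ((y₁*r - (y₁*x₂ - x₁*y₂) * (x₂/r))/r^2) = 0 := by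
    field_simp
    linear_combination (-(x₁^2+y₁^2)*r^2) * hr2
  linear_combination hS + hT
end
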